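/- For all real w, z: ∫_{-∞}^{∞} φ(x,w)·φ(x,z)·e^{x(w+z) - x²} dx = (P² + 1)·e^{(w+z)²/4}·√π, where P = (1/2)wz - 1 and φ(x,z) = z²/2 + (1 - xz)/(x² + 1/2). -/

import Mathlib

open MeasureTheory

namespace Stmt11Aux

open Real Filter Set

lemma hD (x : ℝ) : (0:ℝ) < x ^ 2 + 1 / 2 := by positivity

lemma gauss_int' (s b : ℝ) (hb : 0 < b) :
    Integrable (fun x : ℝ => Real.exp (x * s - b * x ^ 2)) := by
  have h1 : Integrable (fun x : ℝ => Real.exp (-b * x ^ 2)) := integrable_exp_neg_mul_sq hb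
  have h2 := (h1.comp_sub_right (s / (2 * b))).const_mul (Real.exp (s ^ 2 / (4 * b)))
  refine h2.congr (Filter.Eventually.of_forall fun x => ?_)
  show Real.exp _ * Real.exp _ = _
  rw [← Real.exp_add]
  congr 1
  field_simp
  ring

lemma gauss_int (s : ℝ) : Integrable (fun x : ℝ => Real.exp (x * s - x ^ 2)) := by
  simpa using gauss_int' s 1 one_pos

lemma gauss_val (s : ℝ) :
    ∫ x : ℝ, Real.exp (x * s - x ^ 2) = Real.exp (s ^ 2 / 4) * Real.sqrt Real.pi := by
  have h1 : ∀ x : ℝ, Real.exp (x * s - x ^ 2)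
      = Real.exp (s ^ 2 / 4) * Real.exp (-1 * (x - s / 2) ^ 2) := by
    intro x; rw [← Real.exp_add]; congr 1; ring
  simp_rw [h1]
  rw [MeasureTheory.integral_const_mul,
    integral_sub_right_eq_self (fun x : ℝ => Real.exp (-1 * x ^ 2)) (s / 2),
    integral_gaussian]
  norm_num

lemma gauss_tendsto_top (s : ℝ) :
    Tendsto (fun x : ℝ => Real.exp (x * s - x ^ 2)) atTop (nhds 0) := by
  have h1 : Tendsto (fun x : ℝ => x * s - x ^ 2) atTop atBot := by
    have h2 : Tendsto (fun x : ℝ => (x - s / 2) ^ 2) atTop atTop := by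
      have := tendsto_atTop_add_const_right atTop (-(s / 2)) tendsto_id
      simpa [pow_two, sub_eq_add_neg] using this.atTop_mul_atTop₀ this
    have h3 : Tendsto (fun x : ℝ => s ^ 2 / 4 - (x - s / 2) ^ 2) atTop atBot := by
      simpa [sub_eq_add_neg] using tendsto_atBot_add_const_left atTop (s ^ 2 / 4) (tendsto_neg_atBot_iff.2 h2)
    refine h3.congr fun x => by ring
  exact Real.tendsto_exp_atBot.comp h1

lemma gauss_tendsto_bot (s : ℝ) :
    Tendsto (fun x : ℝ => Real.exp (x * s - x ^ 2)) atBot (nhds 0) := by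
  have h1 : Tendsto (fun x : ℝ => x * s - x ^ 2) atBot atBot := by
    have h2 : Tendsto (fun x : ℝ => (x - s / 2) ^ 2) atBot atTop := by
      have hb : Tendsto (fun x : ℝ => x - s / 2) atBot atBot :=
        tendsto_atBot_add_const_right atBot (-(s / 2)) tendsto_id
      simpa [pow_two] using hb.atBot_mul_atBot₀ hb
    have h3 : Tendsto (fun x : ℝ => s ^ 2 / 4 - (x - s / 2) ^ 2) atBot atBot := by
      simpa [sub_eq_add_neg] using tendsto_atBot_add_const_left atBot (s ^ 2 / 4) (tendsto_neg_atBot_iff.2 h2)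
    refine h3.congr fun x => by ring
  exact Real.tendsto_exp_atBot.comp h1

lemma hasDeriv_H (w z x : ℝ) :
    HasDerivAt
      (fun x : ℝ => ((1 - w * z / 2) * x + (w + z) / 2) * Real.exp (x * (w + z) - x ^ 2)
        / (x ^ 2 + 1 / 2))
      ((w ^ 2 / 2 + (1 - x * w) / (x ^ 2 + 1 / 2)) *
          (z ^ 2 / 2 + (1 - x * z) / (x ^ 2 + 1 / 2)) * Real.exp (x * (w + z) - x ^ 2) -
        ((w * z) ^ 2 / 4 - w * z + 2) * Real.exp (x * (w + z) - x ^ 2)) x := by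
  have hq : HasDerivAt (fun x : ℝ => x * (w + z) - x ^ 2) ((w + z) - 2 * x) x := by
    simpa [Pi.sub_def] using ((hasDerivAt_id x).mul_const (w + z)).sub (hasDerivAt_pow 2 x)
  have hg : HasDerivAt (fun x : ℝ => Real.exp (x * (w + z) - x ^ 2))
      (Real.exp (x * (w + z) - x ^ 2) * ((w + z) - 2 * x)) x := hq.exp
  have hL : HasDerivAt (fun x : ℝ => (1 - w * z / 2) * x + (w + z) / 2) (1 - w * z / 2) x := by
    simpa using ((hasDerivAt_id x).const_mul (1 - w * z / 2)).add_const ((w + z) / 2)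
  have hnum := hL.mul hg
  have hden : HasDerivAt (fun x : ℝ => x ^ 2 + 1 / 2) (2 * x) x := by
    simpa using (hasDerivAt_pow 2 x).add_const (1 / 2 : ℝ)
  have h := hnum.div hden (hD x).ne'
  convert h using 1
  have h2 : (x ^ 2 + 1 / 2 : ℝ) ≠ 0 := (hD x).ne'
  · rfl
  · rfl
  · rfl
  simp only [Pi.mul_apply]
  field_simp
  ring

lemma H_bound (w z x : ℝ) :
    ‖((1 - w * z / 2) * x + (w + z) / 2) * Real.exp (x * (w + z) - x ^ 2) / (x ^ 2 + 1 / 2)‖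
      ≤ (|1 - w * z / 2| + |w + z|) * Real.exp (x * (w + z) - x ^ 2) := by
  have hg : (0:ℝ) < Real.exp (x * (w + z) - x ^ 2) := Real.exp_pos _
  rw [Real.norm_eq_abs, abs_div, abs_mul, abs_of_pos (hD x), abs_of_pos hg,
    div_le_iff₀ (hD x)]
  have h1 : |(1 - w * z / 2) * x + (w + z) / 2| ≤
      (|1 - w * z / 2| + |w + z|) * (x ^ 2 + 1 / 2) := by
    have h2 : |(1 - w * z / 2) * x + (w + z) / 2| ≤ |1 - w * z / 2| * |x| + |w + z| / 2 := by
      calc |(1 - w * z / 2) * x + (w + z) / 2| ≤ |(1 - w * z / 2) * x| + |(w + z) / 2| :=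
            abs_add_le _ _
        _ = |1 - w * z / 2| * |x| + |w + z| / 2 := by rw [abs_mul, abs_div]; norm_num
    have h3 : |x| ≤ x ^ 2 + 1 / 2 := by nlinarith [sq_nonneg (|x| - 1 / 2), sq_abs x]
    nlinarith [abs_nonneg (1 - w * z / 2), abs_nonneg (w + z), abs_nonneg x, sq_nonneg x]
  nlinarith [h1, hg.le]

lemma H_tendsto_top (w z : ℝ) :
    Tendsto (fun x : ℝ => ((1 - w * z / 2) * x + (w + z) / 2) *
      Real.exp (x * (w + z) - x ^ 2) / (x ^ 2 + 1 / 2)) atTop (nhds 0) := by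
  refine squeeze_zero_norm (fun x => H_bound w z x) ?_
  simpa using (gauss_tendsto_top (w + z)).const_mul (|1 - w * z / 2| + |w + z|)

lemma H_tendsto_bot (w z : ℝ) :
    Tendsto (fun x : ℝ => ((1 - w * z / 2) * x + (w + z) / 2) *
      Real.exp (x * (w + z) - x ^ 2) / (x ^ 2 + 1 / 2)) atBot (nhds 0) := by
  refine squeeze_zero_norm (fun x => H_bound w z x) ?_
  simpa using (gauss_tendsto_bot (w + z)).const_mul (|1 - w * z / 2| + |w + z|)

lemma phi_bound (w x : ℝ) :
    |w ^ 2 / 2 + (1 - x * w) / (x ^ 2 + 1 / 2)| ≤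
      4 * (w ^ 2 / 2 + 2 + |w|) * Real.exp (x ^ 2 / 4) := by
  have hE : x ^ 2 / 4 + 1 ≤ Real.exp (x ^ 2 / 4) := Real.add_one_le_exp _
  have hxw : |x * w| = |x| * |w| := abs_mul x w
  have h1 : |(1 - x * w) / (x ^ 2 + 1 / 2)| ≤ 2 * (1 + |x| * |w|) := by
    rw [abs_div, abs_of_pos (hD x), div_le_iff₀ (hD x)]
    have : |1 - x * w| ≤ 1 + |x| * |w| := by
      calc |1 - x * w| ≤ |1| + |x * w| := abs_sub _ _
        _ = 1 + |x| * |w| := by rw [abs_one, hxw]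
    nlinarith [abs_nonneg (1 - x * w), sq_nonneg x, abs_nonneg x, abs_nonneg w]
  have h2 : |w ^ 2 / 2 + (1 - x * w) / (x ^ 2 + 1 / 2)| ≤
      w ^ 2 / 2 + 2 * (1 + |x| * |w|) := by
    calc |w ^ 2 / 2 + (1 - x * w) / (x ^ 2 + 1 / 2)| ≤
        |w ^ 2 / 2| + |(1 - x * w) / (x ^ 2 + 1 / 2)| := abs_add_le _ _
      _ ≤ w ^ 2 / 2 + 2 * (1 + |x| * |w|) := by
          rw [abs_of_nonneg (by positivity : (0:ℝ) ≤ w ^ 2 / 2)]; linarith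
  have h3 : 2 * |x| * |w| ≤ |w| * x ^ 2 + |w| := by
    nlinarith [sq_nonneg (|x| - 1), sq_abs x, abs_nonneg w, abs_nonneg x]
  nlinarith [h2, h3, abs_nonneg w, sq_nonneg x, sq_nonneg w, hE,
    mul_nonneg (abs_nonneg w) (sq_nonneg x)]

lemma f_integrable (w z : ℝ) :
    Integrable (fun x : ℝ => (w ^ 2 / 2 + (1 - x * w) / (x ^ 2 + 1 / 2)) *
      (z ^ 2 / 2 + (1 - x * z) / (x ^ 2 + 1 / 2)) * Real.exp (x * (w + z) - x ^ 2)) := by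
  set A := w ^ 2 / 2 + 2 + |w| with hA
  set B := z ^ 2 / 2 + 2 + |z| with hB
  have hA0 : (0:ℝ) < A := by positivity
  have hB0 : (0:ℝ) < B := by positivity
  have hM : Integrable (fun x : ℝ => 16 * A * B * Real.exp (x * (w + z) - 1/2 * x ^ 2)) :=
    (gauss_int' (w + z) (1/2) (by norm_num)).const_mul _
  refine hM.mono' ?_ (Filter.Eventually.of_forall fun x => ?_)
  · apply Continuous.aestronglyMeasurable
    apply Continuous.mul
    apply Continuous.mul
    · exact continuous_const.add (continuous_const.sub
        (continuous_id.mul continuous_const) |>.div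
        ((continuous_pow 2).add continuous_const) fun x => (hD x).ne')
    · exact continuous_const.add (continuous_const.sub
        (continuous_id.mul continuous_const) |>.div
        ((continuous_pow 2).add continuous_const) fun x => (hD x).ne')
    · exact Real.continuous_exp.comp ((continuous_id.mul continuous_const).sub
        (continuous_pow 2))
  · have h1 := phi_bound w x
    have h2 := phi_bound z x
    have hg : (0:ℝ) < Real.exp (x * (w + z) - x ^ 2) := Real.exp_pos _
    have hE : (0:ℝ) < Real.exp (x ^ 2 / 4) := Real.exp_pos _
    rw [Real.norm_eq_abs, abs_mul, abs_of_pos hg]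
    have h3 : |w ^ 2 / 2 + (1 - x * w) / (x ^ 2 + 1 / 2)| *
        |z ^ 2 / 2 + (1 - x * z) / (x ^ 2 + 1 / 2)| ≤
        16 * A * B * (Real.exp (x ^ 2 / 4) * Real.exp (x ^ 2 / 4)) := by
      have h4 := mul_le_mul h1 h2 (abs_nonneg _) (by positivity)
      have h5 : 4 * (w ^ 2 / 2 + 2 + |w|) * Real.exp (x ^ 2 / 4) *
          (4 * (z ^ 2 / 2 + 2 + |z|) * Real.exp (x ^ 2 / 4)) =
          16 * A * B * (Real.exp (x ^ 2 / 4) * Real.exp (x ^ 2 / 4)) := by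
        rw [hA, hB]; ring
      linarith
    rw [abs_mul]
    calc |w ^ 2 / 2 + (1 - x * w) / (x ^ 2 + 1 / 2)| *
          |z ^ 2 / 2 + (1 - x * z) / (x ^ 2 + 1 / 2)| * Real.exp (x * (w + z) - x ^ 2)
        ≤ 16 * A * B * (Real.exp (x ^ 2 / 4) * Real.exp (x ^ 2 / 4)) *
          Real.exp (x * (w + z) - x ^ 2) := mul_le_mul_of_nonneg_right h3 hg.le
      _ = 16 * A * B * Real.exp (x * (w + z) - 1/2 * x ^ 2) := by
          rw [← Real.exp_add, mul_assoc, ← Real.exp_add]; congr 2; ring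

lemma key (w z : ℝ) :
    ∫ x : ℝ, (w ^ 2 / 2 + (1 - x * w) / (x ^ 2 + 1 / 2)) *
        (z ^ 2 / 2 + (1 - x * z) / (x ^ 2 + 1 / 2)) * Real.exp (x * (w + z) - x ^ 2) =
      (((1 / 2) * w * z - 1) ^ 2 + 1) * Real.exp ((w + z) ^ 2 / 4) * Real.sqrt Real.pi := by
  set C : ℝ := (w * z) ^ 2 / 4 - w * z + 2 with hC
  have hfi := f_integrable w z
  have hgi := gauss_int (w + z)
  have hH'i : Integrable (fun x : ℝ =>
      (w ^ 2 / 2 + (1 - x * w) / (x ^ 2 + 1 / 2)) *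
        (z ^ 2 / 2 + (1 - x * z) / (x ^ 2 + 1 / 2)) * Real.exp (x * (w + z) - x ^ 2) -
      C * Real.exp (x * (w + z) - x ^ 2)) := hfi.sub (hgi.const_mul C)
  have hIic : ∫ x in Iic (0:ℝ),
      ((w ^ 2 / 2 + (1 - x * w) / (x ^ 2 + 1 / 2)) *
        (z ^ 2 / 2 + (1 - x * z) / (x ^ 2 + 1 / 2)) * Real.exp (x * (w + z) - x ^ 2) -
      C * Real.exp (x * (w + z) - x ^ 2)) =
      ((1 - w * z / 2) * 0 + (w + z) / 2) * Real.exp (0 * (w + z) - 0 ^ 2)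
        / (0 ^ 2 + 1 / 2) - 0 := by
    exact integral_Iic_of_hasDerivAt_of_tendsto' (fun x _ => hasDeriv_H w z x)
      hH'i.integrableOn (H_tendsto_bot w z)
  have hIoi : ∫ x in Ioi (0:ℝ),
      ((w ^ 2 / 2 + (1 - x * w) / (x ^ 2 + 1 / 2)) *
        (z ^ 2 / 2 + (1 - x * z) / (x ^ 2 + 1 / 2)) * Real.exp (x * (w + z) - x ^ 2) -
      C * Real.exp (x * (w + z) - x ^ 2)) =
      0 - ((1 - w * z / 2) * 0 + (w + z) / 2) * Real.exp (0 * (w + z) - 0 ^ 2)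
        / (0 ^ 2 + 1 / 2) := by
    exact integral_Ioi_of_hasDerivAt_of_tendsto' (fun x _ => hasDeriv_H w z x)
      hH'i.integrableOn (H_tendsto_top w z)
  have hzero : ∫ x : ℝ,
      ((w ^ 2 / 2 + (1 - x * w) / (x ^ 2 + 1 / 2)) *
        (z ^ 2 / 2 + (1 - x * z) / (x ^ 2 + 1 / 2)) * Real.exp (x * (w + z) - x ^ 2) -
      C * Real.exp (x * (w + z) - x ^ 2)) = 0 := by
    rw [← intervalIntegral.integral_Iic_add_Ioi (b := (0:ℝ)) hH'i.integrableOn hH'i.integrableOn,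
      hIic, hIoi]
    ring
  have hsplit : ∫ x : ℝ, (w ^ 2 / 2 + (1 - x * w) / (x ^ 2 + 1 / 2)) *
        (z ^ 2 / 2 + (1 - x * z) / (x ^ 2 + 1 / 2)) * Real.exp (x * (w + z) - x ^ 2) =
      (∫ x : ℝ, C * Real.exp (x * (w + z) - x ^ 2)) +
      ∫ x : ℝ, ((w ^ 2 / 2 + (1 - x * w) / (x ^ 2 + 1 / 2)) *
        (z ^ 2 / 2 + (1 - x * z) / (x ^ 2 + 1 / 2)) * Real.exp (x * (w + z) - x ^ 2) -
      C * Real.exp (x * (w + z) - x ^ 2)) := by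
    rw [← integral_add (hgi.const_mul C) hH'i]
    congr 1
    funext x
    ring
  rw [hsplit, hzero, integral_const_mul, gauss_val, add_zero, hC]
  ring

end Stmt11Aux

/-- `∫ φ(x,w) φ(x,z) e^{x(w+z) - x²} dx = (P² + 1) e^{(w+z)²/4} √π`
with `P = wz/2 - 1` and `φ(x,z) = z²/2 + (1-xz)/(x²+1/2)`. -/
theorem stmt_11 (w z : ℝ) (φ : ℝ → ℝ → ℝ)
    (hφ : ∀ x z : ℝ, φ x z = z ^ 2 / 2 + (1 - x * z) / (x ^ 2 + 1 / 2)) :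
    ∫ x : ℝ, φ x w * φ x z * Real.exp (x * (w + z) - x ^ 2) =
      (((1 / 2) * w * z - 1) ^ 2 + 1) * Real.exp ((w + z) ^ 2 / 4) *
        Real.sqrt Real.pi := by
  simp_rw [hφ]
  exact Stmt11Aux.key w z
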